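/- arXiv:1009.2249 — 2 statements merged into one kernel-verified Lean document; each statement's English description precedes it below -/
import Mathlib

section
/- Let T be a contraction on a complex Hilbert space H whose defect spaces 𝒟_T and 𝒟_{T*} both have finite dimension N, and let E be a complex Hilbert space of dimension N. For any choice of unitary operators ω : E → 𝒟_{T*} and ω_* : E → 𝒟_T, the operator U defined on H ⊕ E by U(x ⊕ e) = (T x + D_{T*}(ω e)) ⊕ (ω_*⁻¹(D_T x) − ω_*⁻¹(T*(ω e))) is a unitary operator on H ⊕ E whose compression to H equals T (i.e. a unitary N-dilation of T). -/
open scoped InnerProductSpace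
open Filter Topology

/-- The numerical range of a bounded operator: `W(T) = {⟨Tx, x⟩ : ‖x‖ = 1}`
(written with Mathlib's inner product, which is linear in the second variable). -/
def numericalRange {H : Type*} [NormedAddCommGroup H] [InnerProductSpace ℂ H]
    (T : H →L[ℂ] H) : Set ℂ :=
  {z | ∃ x : H, ‖x‖ = 1 ∧ (inner ℂ x (T x) : ℂ) = z}

/-- The defect operator `D_T = (I - T*T)^{1/2}` of a contraction. -/
noncomputable def defectOp {H : Type*} [NormedAddCommGroup H] [InnerProductSpace ℂ H]
    [CompleteSpace H] (T : H →L[ℂ] H) : H →L[ℂ] H :=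
  CFC.sqrt (1 - ContinuousLinearMap.adjoint T * T)

/-- The defect space `𝒟_T = closure (range D_T)`. -/
noncomputable def defectSpace {H : Type*} [NormedAddCommGroup H] [InnerProductSpace ℂ H]
    [CompleteSpace H] (T : H →L[ℂ] H) : Submodule ℂ H :=
  (LinearMap.range (defectOp T : H →ₗ[ℂ] H)).topologicalClosure

/-- `U` is a unitary dilation of `T` on the orthogonal direct sum `H ⊕ E`
(realized as `WithLp 2 (H × E)`): `U` is unitary and the compression of `U` to `H` is `T`. -/
def IsUnitaryDilation {H E : Type*} [NormedAddCommGroup H] [InnerProductSpace ℂ H]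
    [CompleteSpace H] [NormedAddCommGroup E] [InnerProductSpace ℂ E] [CompleteSpace E]
    (T : H →L[ℂ] H) (U : WithLp 2 (H × E) →L[ℂ] WithLp 2 (H × E)) : Prop :=
  U ∈ unitary (WithLp 2 (H × E) →L[ℂ] WithLp 2 (H × E)) ∧
    ∀ x : H, T x = (WithLp.equiv 2 (H × E) (U ((WithLp.equiv 2 (H × E)).symm (x, 0)))).1

set_option synthInstance.maxHeartbeats 1000000
set_option maxHeartbeats 4000000

section Aux

variable {H : Type*} [NormedAddCommGroup H] [InnerProductSpace ℂ H] [CompleteSpace H]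

lemma real_sqrt_eq' : (fun x : ℝ ↦ (NNReal.sqrt x.toNNReal : ℝ)) = Real.sqrt := by funext x; rw [Real.sqrt]

lemma cfcHomSuperset_sqrt (P : H →L[ℂ] H) (hP : 0 ≤ P) {M : ℝ}
    (hs : spectrum ℝ P ⊆ Set.Icc 0 M) :
    cfcHomSuperset (IsSelfAdjoint.of_nonneg hP) hs
      (ContinuousMap.restrict (Set.Icc 0 M) ⟨Real.sqrt, Real.continuous_sqrt⟩) = CFC.sqrt P := by
  rw [CFC.sqrt_eq_cfc, cfc_nnreal_eq_real _ _ hP, real_sqrt_eq',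
    cfc_apply Real.sqrt P (IsSelfAdjoint.of_nonneg hP) Real.continuous_sqrt.continuousOn]
  rw [cfcHomSuperset]
  rfl

lemma spectrum_subset_Icc [Nontrivial H] (P : H →L[ℂ] H) (hP : 0 ≤ P) {M : ℝ} (hM : ‖P‖ ≤ M) :
    spectrum ℝ P ⊆ Set.Icc 0 M := by
  intro x hx
  refine ⟨spectrum_nonneg_of_nonneg hP hx, ?_⟩
  have h1 := spectrum.norm_le_norm_of_mem hx
  have h2 : |x| ≤ ‖P‖ := by simpa using h1
  linarith [abs_le.mp h2]

lemma sqrt_intertwine_aux (S P Q : H →L[ℂ] H) (hP : 0 ≤ P) (hQ : 0 ≤ Q) (h : S * P = Q * S)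
    (M : ℝ) (hsP : spectrum ℝ P ⊆ Set.Icc 0 M) (hsQ : spectrum ℝ Q ⊆ Set.Icc 0 M) :
    S * CFC.sqrt P = CFC.sqrt Q * S := by
  let Ssub : Subalgebra ℝ C(Set.Icc 0 M, ℝ) :=
  { carrier := {g | S * cfcHomSuperset (IsSelfAdjoint.of_nonneg hP) hsP g
      = cfcHomSuperset (IsSelfAdjoint.of_nonneg hQ) hsQ g * S}
    mul_mem' := by
      intro g g' hg hg'
      simp only [Set.mem_setOf_eq, map_mul] at hg hg' ⊢
      rw [← mul_assoc, hg, mul_assoc, hg', ← mul_assoc]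
    add_mem' := by
      intro g g' hg hg'
      simp only [Set.mem_setOf_eq, map_add] at hg hg' ⊢
      rw [mul_add, add_mul, hg, hg']
    algebraMap_mem' := by
      intro r
      show S * cfcHomSuperset (IsSelfAdjoint.of_nonneg hP) hsP (algebraMap ℝ _ r)
        = cfcHomSuperset (IsSelfAdjoint.of_nonneg hQ) hsQ (algebraMap ℝ _ r) * S
      rw [AlgHomClass.commutes, AlgHomClass.commutes, Algebra.commutes] }
  have hclosed : IsClosed (Ssub : Set C(Set.Icc 0 M, ℝ)) := by
    apply isClosed_eq
    · exact (continuous_mul_left S).comp (cfcHomSuperset_continuous _ _)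
    · exact (continuous_mul_right S).comp (cfcHomSuperset_continuous _ _)
  have hpoly : polynomialFunctions (Set.Icc 0 M) ≤ Ssub := by
    rw [polynomialFunctions.eq_adjoin_X]
    apply Algebra.adjoin_le
    rintro g rfl
    have hXid : (Polynomial.toContinuousMapOnAlgHom (Set.Icc 0 M)) Polynomial.X
        = ContinuousMap.restrict (Set.Icc 0 M) (ContinuousMap.id ℝ) := by
      ext x; simp [Polynomial.toContinuousMapOn, Polynomial.toContinuousMap]
    show S * cfcHomSuperset _ hsP _ = cfcHomSuperset _ hsQ _ * S
    rw [hXid, cfcHomSuperset_id, cfcHomSuperset_id, h]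
  have htop : Ssub = ⊤ := top_unique <| by
    rw [← polynomialFunctions.topologicalClosure (Set.Icc 0 M)]
    exact Subalgebra.topologicalClosure_minimal hpoly hclosed
  have key : S * cfcHomSuperset (IsSelfAdjoint.of_nonneg hP) hsP
        (ContinuousMap.restrict (Set.Icc 0 M) ⟨Real.sqrt, Real.continuous_sqrt⟩)
      = cfcHomSuperset (IsSelfAdjoint.of_nonneg hQ) hsQ
        (ContinuousMap.restrict (Set.Icc 0 M) ⟨Real.sqrt, Real.continuous_sqrt⟩) * S := by
    have hmem : (ContinuousMap.restrict (Set.Icc 0 M)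
        (⟨Real.sqrt, Real.continuous_sqrt⟩ : C(ℝ, ℝ))) ∈ Ssub := by
      rw [htop]; exact Algebra.mem_top
    exact hmem
  rwa [cfcHomSuperset_sqrt P hP hsP, cfcHomSuperset_sqrt Q hQ hsQ] at key

lemma sqrt_intertwine (S P Q : H →L[ℂ] H) (hP : 0 ≤ P) (hQ : 0 ≤ Q) (h : S * P = Q * S) :
    S * CFC.sqrt P = CFC.sqrt Q * S := by
  rcases subsingleton_or_nontrivial H with hH | hH
  · exact Subsingleton.elim _ _
  exact sqrt_intertwine_aux S P Q hP hQ h (max ‖P‖ ‖Q‖)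
    (spectrum_subset_Icc P hP (le_max_left _ _))
    (spectrum_subset_Icc Q hQ (le_max_right _ _))

lemma defect_nonneg (T : H →L[ℂ] H) (hT : ‖T‖ ≤ 1) :
    0 ≤ 1 - ContinuousLinearMap.adjoint T * T := by
  rw [sub_nonneg, ← ContinuousLinearMap.star_eq_adjoint,
    ← CStarAlgebra.norm_le_one_iff_of_nonneg _ (star_mul_self_nonneg T)]
  rw [CStarRing.norm_star_mul_self]
  nlinarith [norm_nonneg T]

end Aux

/-- Conversely, for any unitaries `ω : E → 𝒟_{T*}` and `ω_* : E → 𝒟_T`,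
the formula `U(x ⊕ e) = (T x + D_{T*}(ω e)) ⊕ (ω_*⁻¹(D_T x) - ω_*⁻¹(T*(ω e)))` defines a
unitary `N`-dilation of `T` on `H ⊕ E`.  (The second component is expressed equivalently,
after applying the unitary `ω_*`, as `ω_*(second component of U(x ⊕ e)) = D_T x - T*(ω e)`
in `H`.) -/
theorem unitary_dilation_of_unitaries
    {H : Type*} [NormedAddCommGroup H] [InnerProductSpace ℂ H] [CompleteSpace H]
    {E : Type*} [NormedAddCommGroup E] [InnerProductSpace ℂ E] [CompleteSpace E]
    (N : ℕ) (T : H →L[ℂ] H) (hT : ‖T‖ ≤ 1)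
    [FiniteDimensional ℂ (defectSpace T)]
    [FiniteDimensional ℂ (defectSpace (ContinuousLinearMap.adjoint T))]
    [FiniteDimensional ℂ E]
    (hdT : Module.finrank ℂ (defectSpace T) = N)
    (hdTs : Module.finrank ℂ (defectSpace (ContinuousLinearMap.adjoint T)) = N)
    (hE : Module.finrank ℂ E = N)
    (ω : E ≃ₗᵢ[ℂ] defectSpace (ContinuousLinearMap.adjoint T))
    (ωs : E ≃ₗᵢ[ℂ] defectSpace T) :
    ∃ U : WithLp 2 (H × E) →L[ℂ] WithLp 2 (H × E),
      IsUnitaryDilation T U ∧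
      ∀ (x : H) (e : E),
        let v := WithLp.equiv 2 (H × E) (U ((WithLp.equiv 2 (H × E)).symm (x, e)))
        v.1 = T x + defectOp (ContinuousLinearMap.adjoint T) (ω e : H) ∧
          (ωs v.2 : H) = defectOp T x - ContinuousLinearMap.adjoint T (ω e : H) := by
  have hadjadj : ContinuousLinearMap.adjoint (ContinuousLinearMap.adjoint T) = T :=
    ContinuousLinearMap.adjoint_adjoint T
  have hT's : ‖ContinuousLinearMap.adjoint T‖ ≤ 1 := by
    rw [← ContinuousLinearMap.star_eq_adjoint, norm_star]; exact hT
  have h1 : 0 ≤ 1 - (ContinuousLinearMap.adjoint T) * T := defect_nonneg T hT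
  have h2 : 0 ≤ 1 - T * (ContinuousLinearMap.adjoint T) := by
    have := defect_nonneg (ContinuousLinearMap.adjoint T) hT's
    rwa [hadjadj] at this
  set D : H →L[ℂ] H := defectOp T with hDdef
  set Ds : H →L[ℂ] H := defectOp (ContinuousLinearMap.adjoint T) with hDsdef
  have hDeq : D = CFC.sqrt (1 - (ContinuousLinearMap.adjoint T) * T) := rfl
  have hDseq : Ds = CFC.sqrt (1 - T * (ContinuousLinearMap.adjoint T)) := by
    rw [hDsdef, defectOp, hadjadj]
  have hD0 : (0 : H →L[ℂ] H) ≤ D := hDeq ▸ CFC.sqrt_nonneg _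
  have hDs0 : (0 : H →L[ℂ] H) ≤ Ds := hDseq ▸ CFC.sqrt_nonneg _
  have hDsa : IsSelfAdjoint D := .of_nonneg hD0
  have hDssa : IsSelfAdjoint Ds := .of_nonneg hDs0
  have hDD : D * D = 1 - (ContinuousLinearMap.adjoint T) * T := by rw [hDeq]; exact CFC.sqrt_mul_sqrt_self _ h1
  have hDsDs : Ds * Ds = 1 - T * (ContinuousLinearMap.adjoint T) := by rw [hDseq]; exact CFC.sqrt_mul_sqrt_self _ h2
  have hcomm : T * (1 - (ContinuousLinearMap.adjoint T) * T) = (1 - T * (ContinuousLinearMap.adjoint T)) * T := by noncomm_ring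
  have hTD : T * D = Ds * T := by
    rw [hDeq, hDseq]; exact sqrt_intertwine T _ _ h1 h2 hcomm
  have hDT' : D * (ContinuousLinearMap.adjoint T) = (ContinuousLinearMap.adjoint T) * Ds := by
    have h := congrArg star hTD
    rw [star_mul, star_mul] at h
    rw [hDsa.star_eq, hDssa.star_eq, ContinuousLinearMap.star_eq_adjoint] at h
    exact h
  -- pointwise versions
  have hDDx : ∀ z : H, D (D z) = z - (ContinuousLinearMap.adjoint T) (T z) := fun z => by
    have := ContinuousLinearMap.ext_iff.mp hDD z
    simpa [ContinuousLinearMap.mul_apply, ContinuousLinearMap.sub_apply,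
      ContinuousLinearMap.one_apply] using this
  have hDsDsx : ∀ z : H, Ds (Ds z) = z - T ((ContinuousLinearMap.adjoint T) z) := fun z => by
    have := ContinuousLinearMap.ext_iff.mp hDsDs z
    simpa [ContinuousLinearMap.mul_apply, ContinuousLinearMap.sub_apply,
      ContinuousLinearMap.one_apply] using this
  have hTDx : ∀ z : H, T (D z) = Ds (T z) := fun z => by
    have := ContinuousLinearMap.ext_iff.mp hTD z
    simpa [ContinuousLinearMap.mul_apply] using this
  have hDT'x : ∀ z : H, D ((ContinuousLinearMap.adjoint T) z) = (ContinuousLinearMap.adjoint T) (Ds z) := fun z => by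
    have := ContinuousLinearMap.ext_iff.mp hDT' z
    simpa [ContinuousLinearMap.mul_apply] using this
  -- memberships
  have memD : ∀ x : H, D x ∈ defectSpace T := fun x =>
    Submodule.le_topologicalClosure (LinearMap.range (D : H →ₗ[ℂ] H)) ⟨x, rfl⟩
  have memDs : ∀ x : H, Ds x ∈ defectSpace (ContinuousLinearMap.adjoint T) := fun x =>
    Submodule.le_topologicalClosure (LinearMap.range (Ds : H →ₗ[ℂ] H)) ⟨x, rfl⟩
  have memT'd : ∀ d : defectSpace (ContinuousLinearMap.adjoint T), (ContinuousLinearMap.adjoint T) (d : H) ∈ defectSpace T := by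
    intro d
    have hd : (d : H) ∈ closure ((LinearMap.range (Ds : H →ₗ[ℂ] H) : Submodule ℂ H) : Set H) := by
      rw [← Submodule.topologicalClosure_coe]; exact d.2
    have hmapsto : Set.MapsTo (ContinuousLinearMap.adjoint T) ((LinearMap.range (Ds : H →ₗ[ℂ] H) : Submodule ℂ H) : Set H)
        ((LinearMap.range (D : H →ₗ[ℂ] H) : Submodule ℂ H) : Set H) := by
      rintro _ ⟨z, rfl⟩
      exact ⟨(ContinuousLinearMap.adjoint T) z, hDT'x z⟩
    have := map_mem_closure (ContinuousLinearMap.adjoint T).continuous hd hmapsto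
    rw [defectSpace, ← SetLike.mem_coe, Submodule.topologicalClosure_coe]
    exact this
  have memTd : ∀ d : defectSpace T, T (d : H) ∈ defectSpace (ContinuousLinearMap.adjoint T) := by
    intro d
    have hd : (d : H) ∈ closure ((LinearMap.range (D : H →ₗ[ℂ] H) : Submodule ℂ H) : Set H) := by
      rw [← Submodule.topologicalClosure_coe]; exact d.2
    have hmapsto : Set.MapsTo T ((LinearMap.range (D : H →ₗ[ℂ] H) : Submodule ℂ H) : Set H)
        ((LinearMap.range (Ds : H →ₗ[ℂ] H) : Submodule ℂ H) : Set H) := by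
      rintro _ ⟨z, rfl⟩
      exact ⟨T z, (hTDx z).symm⟩
    have := map_mem_closure T.continuous hd hmapsto
    rw [defectSpace, ← SetLike.mem_coe, Submodule.topologicalClosure_coe]
    exact this
  -- inner ℂ product identities
  have hDswap : ∀ a b : H, (inner ℂ (D a) b : ℂ) = inner ℂ a (D b) := fun a b => by
    conv_lhs => rw [← hDsa.adjoint_eq]
    rw [ContinuousLinearMap.adjoint_inner_left]
  have hDsswap : ∀ a b : H, (inner ℂ (Ds a) b : ℂ) = inner ℂ a (Ds b) := fun a b => by
    conv_lhs => rw [← hDssa.adjoint_eq]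
    rw [ContinuousLinearMap.adjoint_inner_left]
  have l1 : ∀ x y : H, (inner ℂ (T x) (T y) : ℂ) + inner ℂ (D x) (D y) = inner ℂ x y := by
    intro x y
    have e1 : (inner ℂ (D x) (D y) : ℂ) = inner ℂ x (D (D y)) := hDswap x (D y)
    rw [e1, hDDx, inner_sub_right]
    have e2 : (inner ℂ x ((ContinuousLinearMap.adjoint T) (T y)) : ℂ) = inner ℂ (T x) (T y) :=
      ContinuousLinearMap.adjoint_inner_right T x (T y)
    rw [e2]; ring
  have l2 : ∀ a b : H, (inner ℂ (Ds a) (Ds b) : ℂ) + inner ℂ ((ContinuousLinearMap.adjoint T) a) ((ContinuousLinearMap.adjoint T) b) = inner ℂ a b := by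
    intro a b
    have e1 : (inner ℂ (Ds a) (Ds b) : ℂ) = inner ℂ a (Ds (Ds b)) := hDsswap a (Ds b)
    rw [e1, hDsDsx, inner_sub_right]
    have e2 : (inner ℂ a (T ((ContinuousLinearMap.adjoint T) b)) : ℂ) = inner ℂ ((ContinuousLinearMap.adjoint T) a) ((ContinuousLinearMap.adjoint T) b) :=
      (ContinuousLinearMap.adjoint_inner_left T ((ContinuousLinearMap.adjoint T) b) a).symm
    rw [e2]; ring
  have l3 : ∀ x b : H, (inner ℂ (T x) (Ds b) : ℂ) = inner ℂ (D x) ((ContinuousLinearMap.adjoint T) b) := by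
    intro x b
    have e1 : (inner ℂ (T x) (Ds b) : ℂ) = inner ℂ x ((ContinuousLinearMap.adjoint T) (Ds b)) :=
      (ContinuousLinearMap.adjoint_inner_right T x (Ds b)).symm
    rw [e1, ← hDT'x, ← hDswap]
  have l4 : ∀ a y : H, (inner ℂ (Ds a) (T y) : ℂ) = inner ℂ ((ContinuousLinearMap.adjoint T) a) (D y) := by
    intro a y
    have e1 : (inner ℂ ((ContinuousLinearMap.adjoint T) a) (D y) : ℂ) = inner ℂ a (T (D y)) :=
      ContinuousLinearMap.adjoint_inner_left T (D y) a
    rw [e1, hTDx, ← hDsswap]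
  -- the continuous linear maps
  let pe : WithLp 2 (H × E) ≃L[ℂ] H × E := WithLp.prodContinuousLinearEquiv 2 ℂ H E
  let ωL : E →L[ℂ] H :=
    (defectSpace (ContinuousLinearMap.adjoint T)).subtypeL.comp ω.toLinearIsometry.toContinuousLinearMap
  let ωsL : E →L[ℂ] H :=
    (defectSpace T).subtypeL.comp ωs.toLinearIsometry.toContinuousLinearMap
  have hωL : ∀ e : E, ωL e = (ω e : H) := fun e => rfl
  have hωsL : ∀ f : E, ωsL f = (ωs f : H) := fun f => rfl
  let fstL := ContinuousLinearMap.fst ℂ H E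
  let sndL := ContinuousLinearMap.snd ℂ H E
  let c1 : H × E →L[ℂ] H := T.comp fstL + Ds.comp (ωL.comp sndL)
  let c2raw : H × E →L[ℂ] H := D.comp fstL - (ContinuousLinearMap.adjoint T).comp (ωL.comp sndL)
  have hc2mem : ∀ p : H × E, c2raw p ∈ defectSpace T := by
    intro p
    have : c2raw p = D p.1 - (ContinuousLinearMap.adjoint T) (ω p.2 : H) := rfl
    rw [this]
    exact sub_mem (memD p.1) (memT'd (ω p.2))
  let c2 : H × E →L[ℂ] E :=
    (ωs.symm.toLinearIsometry.toContinuousLinearMap).comp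
      (ContinuousLinearMap.codRestrict c2raw (defectSpace T) hc2mem)
  let Φ : H × E →L[ℂ] H × E := c1.prod c2
  let U : WithLp 2 (H × E) →L[ℂ] WithLp 2 (H × E) :=
    (pe.symm : (H × E) →L[ℂ] WithLp 2 (H × E)).comp (Φ.comp (pe : WithLp 2 (H × E) →L[ℂ] H × E))
  -- the inverse
  let c1' : H × E →L[ℂ] H := (ContinuousLinearMap.adjoint T).comp fstL + D.comp (ωsL.comp sndL)
  let c2raw' : H × E →L[ℂ] H := Ds.comp fstL - T.comp (ωsL.comp sndL)
  have hc2mem' : ∀ p : H × E, c2raw' p ∈ defectSpace (ContinuousLinearMap.adjoint T) := by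
    intro p
    have : c2raw' p = Ds p.1 - T (ωs p.2 : H) := rfl
    rw [this]
    exact sub_mem (memDs p.1) (memTd (ωs p.2))
  let c2' : H × E →L[ℂ] E :=
    (ω.symm.toLinearIsometry.toContinuousLinearMap).comp
      (ContinuousLinearMap.codRestrict c2raw' (defectSpace (ContinuousLinearMap.adjoint T)) hc2mem')
  let Ψ : H × E →L[ℂ] H × E := c1'.prod c2'
  let V : WithLp 2 (H × E) →L[ℂ] WithLp 2 (H × E) :=
    (pe.symm : (H × E) →L[ℂ] WithLp 2 (H × E)).comp (Ψ.comp (pe : WithLp 2 (H × E) →L[ℂ] H × E))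
  -- application formulas
  have hUapp : ∀ w : WithLp 2 (H × E),
      U w = (WithLp.equiv 2 (H × E)).symm
        (T w.fst + Ds (ω w.snd : H),
         ωs.symm ⟨D w.fst - (ContinuousLinearMap.adjoint T) (ω w.snd : H), hc2mem (w.fst, w.snd)⟩) := by
    intro w
    show pe.symm (Φ (pe w)) = _
    have hpew : pe w = (w.fst, w.snd) := rfl
    have : Φ (pe w) = (T w.fst + Ds (ω w.snd : H),
        ωs.symm ⟨D w.fst - (ContinuousLinearMap.adjoint T) (ω w.snd : H), hc2mem (w.fst, w.snd)⟩) := by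
      rw [hpew]
      refine Prod.ext rfl ?_
      show ωs.symm ⟨c2raw (w.fst, w.snd), _⟩ = _
      congr 1
    rw [this]
    rfl
  have hVapp : ∀ w : WithLp 2 (H × E),
      V w = (WithLp.equiv 2 (H × E)).symm
        ((ContinuousLinearMap.adjoint T) w.fst + D (ωs w.snd : H),
         ω.symm ⟨Ds w.fst - T (ωs w.snd : H), hc2mem' (w.fst, w.snd)⟩) := by
    intro w
    show pe.symm (Ψ (pe w)) = _
    have : Ψ (pe w) = ((ContinuousLinearMap.adjoint T) w.fst + D (ωs w.snd : H),
        ω.symm ⟨Ds w.fst - T (ωs w.snd : H), hc2mem' (w.fst, w.snd)⟩) := by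
      refine Prod.ext rfl ?_
      show ω.symm ⟨c2raw' (w.fst, w.snd), _⟩ = _
      congr 1
    rw [this]
    rfl
  -- fst/snd of equiv.symm
  have hfst : ∀ p : H × E, ((WithLp.equiv 2 (H × E)).symm p).fst = p.1 := fun p => rfl
  have hsnd : ∀ p : H × E, ((WithLp.equiv 2 (H × E)).symm p).snd = p.2 := fun p => rfl
  -- inner ℂ product preservation
  have hinner : ∀ w v : WithLp 2 (H × E), (inner ℂ (U w) (U v) : ℂ) = inner ℂ w v := by
    intro w v
    rw [hUapp w, hUapp v, WithLp.prod_inner_apply, WithLp.prod_inner_apply]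
    simp only [WithLp.ofLp_fst, WithLp.ofLp_snd]
    rw [hfst, hsnd, hfst, hsnd]
    rw [LinearIsometryEquiv.inner_map_map, Submodule.coe_inner]
    rw [show (inner ℂ w.snd v.snd : ℂ) = inner ℂ (ω w.snd) (ω v.snd) from
      (LinearIsometryEquiv.inner_map_map ω w.snd v.snd).symm, Submodule.coe_inner]
    simp only [Submodule.coe_mk]
    simp only [inner_add_left, inner_add_right, inner_sub_left, inner_sub_right]
    linear_combination l1 w.fst v.fst + l2 (ω w.snd : H) (ω v.snd : H)
      + l3 w.fst (ω v.snd : H) + l4 (ω w.snd : H) v.fst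
  -- U ∘ V = id
  have hUV : ∀ w : WithLp 2 (H × E), U (V w) = w := by
    intro w
    rw [hVapp w, hUapp _]
    rw [hfst, hsnd]
    rw [Equiv.symm_apply_eq]
    have hwsnd : ((ω (ω.symm ⟨Ds w.fst - T (ωs w.snd : H), hc2mem' (w.fst, w.snd)⟩)) : H)
        = Ds w.fst - T (ωs w.snd : H) := by
      rw [LinearIsometryEquiv.apply_symm_apply]
    refine Prod.ext ?_ ?_
    · show T ((ContinuousLinearMap.adjoint T) w.fst + D (ωs w.snd : H)) + Ds _ = (WithLp.equiv 2 (H × E) w).1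
      rw [hwsnd, (rfl : (WithLp.equiv 2 (H × E) w).1 = w.fst)]
      rw [map_add, map_sub, hDsDsx, ← hTDx]
      abel
    · have hval : (⟨D ((ContinuousLinearMap.adjoint T) w.fst + D (ωs w.snd : H))
          - (ContinuousLinearMap.adjoint T) ((ω (ω.symm ⟨Ds w.fst - T (ωs w.snd : H), hc2mem' (w.fst, w.snd)⟩)) : H),
          hc2mem ((ContinuousLinearMap.adjoint T) w.fst + D (ωs w.snd : H),
            ω.symm ⟨Ds w.fst - T (ωs w.snd : H), hc2mem' (w.fst, w.snd)⟩)⟩ : defectSpace T)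
          = ωs w.snd := by
        apply Subtype.ext
        show D ((ContinuousLinearMap.adjoint T) w.fst + D (ωs w.snd : H))
            - (ContinuousLinearMap.adjoint T) ((ω (ω.symm ⟨Ds w.fst - T (ωs w.snd : H), hc2mem' (w.fst, w.snd)⟩)) : H)
            = (ωs w.snd : H)
        rw [hwsnd, map_add, map_sub, hDDx, hDT'x]
        abel
      show ωs.symm _ = (WithLp.equiv 2 (H × E) w).2
      rw [(rfl : (WithLp.equiv 2 (H × E) w).2 = w.snd), hval, LinearIsometryEquiv.symm_apply_apply]
      rfl
  -- adjoint facts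
  have hadj : ContinuousLinearMap.adjoint U * U = 1 := by
    apply ContinuousLinearMap.ext
    intro w
    apply ext_inner_left ℂ
    intro v
    rw [ContinuousLinearMap.mul_apply, ContinuousLinearMap.adjoint_inner_right,
      ContinuousLinearMap.one_apply]
    exact hinner v w
  have hUV' : U * V = 1 := by
    apply ContinuousLinearMap.ext
    intro w
    rw [ContinuousLinearMap.mul_apply, ContinuousLinearMap.one_apply]
    exact hUV w
  have hright : U * ContinuousLinearMap.adjoint U = 1 := by
    have h0 : U * ContinuousLinearMap.adjoint U = U * ContinuousLinearMap.adjoint U * (U * V) := by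
      rw [hUV', mul_one]
    rw [h0, mul_assoc U, ← mul_assoc (ContinuousLinearMap.adjoint U) U V, hadj, one_mul, hUV']
  refine ⟨U, ⟨?_, ?_⟩, ?_⟩
  · rw [Unitary.mem_iff, ContinuousLinearMap.star_eq_adjoint]
    exact ⟨hadj, hright⟩
  · intro x
    rw [hUapp]
    rw [hfst, hsnd]
    simp [Equiv.apply_symm_apply]
  · intro x e
    refine ⟨?_, ?_⟩
    · rw [hUapp]
      rw [hfst, hsnd]
      rw [Equiv.apply_symm_apply]
    · rw [hUapp]
      rw [hfst, hsnd]
      rw [Equiv.apply_symm_apply]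
      show ((ωs (ωs.symm ⟨D x - (ContinuousLinearMap.adjoint T) ((ω e : H)), hc2mem (x, e)⟩)) : H) = D x - (ContinuousLinearMap.adjoint T) (ω e : H)
      rw [LinearIsometryEquiv.apply_symm_apply]
end

section
/- Let T be a contraction on a complex Hilbert space H whose defect spaces 𝒟_T and 𝒟_{T*} both have finite dimension N, let E and E' be complex Hilbert spaces of dimension N, and let u be a fixed unitary operator on H ⊕ E whose compression to H is T. Then every unitary operator U on H ⊕ E' whose compression to H is T has the form U = (I_H ⊕ Ω_*⁻¹) ∘ u ∘ (I_H ⊕ Ω), i.e. U(x ⊕ e') = (I_H ⊕ Ω_*⁻¹)(u(x ⊕ Ω e')) for all x ∈ H, e' ∈ E', for some unitary operators Ω, Ω_* : E' → E. -/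
open scoped InnerProductSpace
open Filter Topology

section Aux

open ContinuousLinearMap

set_option synthInstance.maxHeartbeats 1000000
set_option maxHeartbeats 1000000
set_option linter.unusedSectionVars false

variable {H : Type*} [NormedAddCommGroup H] [InnerProductSpace ℂ H] [CompleteSpace H]
variable {E : Type*} [NormedAddCommGroup E] [InnerProductSpace ℂ E] [CompleteSpace E]

lemma sq_norm_eq {a b : ℝ} (ha : 0 ≤ a) (hb : 0 ≤ b) (h : a^2 = b^2) : a = b := by nlinarith

lemma one_sub_nonneg (T : H →L[ℂ] H) (hT : ‖T‖ ≤ 1) :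
    (0 : H →L[ℂ] H) ≤ 1 - adjoint T * T := by
  rw [ContinuousLinearMap.nonneg_iff_isPositive, ContinuousLinearMap.isPositive_def']
  constructor
  · rw [← ContinuousLinearMap.star_eq_adjoint]
    exact (IsSelfAdjoint.one _).sub (IsSelfAdjoint.star_mul_self T)
  · intro x
    have h1 : ‖T x‖ ≤ ‖x‖ := by
      calc ‖T x‖ ≤ ‖T‖ * ‖x‖ := T.le_opNorm x
      _ ≤ 1 * ‖x‖ := by gcongr
      _ = ‖x‖ := one_mul _
    have h2 : reApplyInnerSelf (1 - adjoint T * T) x = ‖x‖^2 - ‖T x‖^2 := by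
      simp only [reApplyInnerSelf, sub_apply, ContinuousLinearMap.one_apply, ContinuousLinearMap.mul_apply, inner_sub_left,
        adjoint_inner_left, map_sub, inner_self_eq_norm_sq]
    rw [h2]
    nlinarith [norm_nonneg (T x), norm_nonneg x]

lemma defectOp_mem (T : H →L[ℂ] H) (x : H) : defectOp T x ∈ defectSpace T :=
  Submodule.le_topologicalClosure _ (LinearMap.mem_range_self (defectOp T : H →ₗ[ℂ] H) x)

lemma defectOp_sa (T : H →L[ℂ] H) : IsSelfAdjoint (defectOp T) := by
  have h : (0:H →L[ℂ] H) ≤ defectOp T := CFC.sqrt_nonneg _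
  exact ((ContinuousLinearMap.nonneg_iff_isPositive _).mp h).isSelfAdjoint

lemma defectOp_inner (T : H →L[ℂ] H) (hT : ‖T‖ ≤ 1) (x y : H) :
    (inner ℂ (defectOp T x) (defectOp T y) : ℂ) = inner ℂ x y - inner ℂ (T x) (T y) := by
  have hsq : defectOp T * defectOp T = 1 - adjoint T * T :=
    CFC.sqrt_mul_sqrt_self _ (one_sub_nonneg T hT)
  have h1 : (inner ℂ (defectOp T x) (defectOp T y) : ℂ)
      = inner ℂ x ((defectOp T * defectOp T) y) := by
    rw [ContinuousLinearMap.mul_apply, ← adjoint_inner_right, (defectOp_sa T).adjoint_eq]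
  rw [h1, hsq]
  simp only [sub_apply, ContinuousLinearMap.one_apply, ContinuousLinearMap.mul_apply, inner_sub_right, adjoint_inner_right]

lemma defectOp_norm (T : H →L[ℂ] H) (hT : ‖T‖ ≤ 1) (x : H) :
    ‖defectOp T x‖^2 = ‖x‖^2 - ‖T x‖^2 := by
  have h := defectOp_inner T hT x x
  rw [inner_self_eq_norm_sq_to_K, inner_self_eq_norm_sq_to_K, inner_self_eq_norm_sq_to_K] at h
  exact_mod_cast h

lemma defectSpace_eq_range (T : H →L[ℂ] H) [FiniteDimensional ℂ (defectSpace T)] :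
    LinearMap.range (defectOp T : H →ₗ[ℂ] H) = defectSpace T := by
  have hle : LinearMap.range (defectOp T : H →ₗ[ℂ] H) ≤ defectSpace T :=
    Submodule.le_topologicalClosure _
  haveI : FiniteDimensional ℂ (LinearMap.range (defectOp T : H →ₗ[ℂ] H)) :=
    Submodule.finiteDimensional_of_le hle
  exact
    (((LinearMap.range (defectOp T : H →ₗ[ℂ] H)).closed_of_finiteDimensional).submodule_topologicalClosure_eq).symm

lemma inner_symm_fst_left (y : H) (z : WithLp 2 (H × E)) :
    (inner ℂ ((WithLp.equiv 2 (H × E)).symm (y, 0)) z : ℂ) = inner ℂ y z.ofLp.1 := by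
  rw [WithLp.prod_inner_apply]
  have h1 : ((WithLp.equiv 2 (H × E)).symm (y, (0:E))).ofLp.1 = y := rfl
  have h2 : ((WithLp.equiv 2 (H × E)).symm (y, (0:E))).ofLp.2 = (0:E) := rfl
  rw [h1, h2, inner_zero_left, add_zero]

lemma inner_symm_fst_right (y : H) (z : WithLp 2 (H × E)) :
    (inner ℂ z ((WithLp.equiv 2 (H × E)).symm (y, 0)) : ℂ) = inner ℂ z.ofLp.1 y := by
  rw [WithLp.prod_inner_apply]
  have h1 : ((WithLp.equiv 2 (H × E)).symm (y, (0:E))).ofLp.1 = y := rfl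
  have h2 : ((WithLp.equiv 2 (H × E)).symm (y, (0:E))).ofLp.2 = (0:E) := rfl
  rw [h1, h2, inner_zero_right, add_zero]

lemma inner_symm_snd_right (e : E) (z : WithLp 2 (H × E)) :
    (inner ℂ z ((WithLp.equiv 2 (H × E)).symm (0, e)) : ℂ) = inner ℂ z.ofLp.2 e := by
  rw [WithLp.prod_inner_apply]
  have h1 : ((WithLp.equiv 2 (H × E)).symm ((0:H), e)).ofLp.1 = (0:H) := rfl
  have h2 : ((WithLp.equiv 2 (H × E)).symm ((0:H), e)).ofLp.2 = e := rfl
  rw [h1, h2, inner_zero_right, zero_add]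

lemma starU_dilation (T : H →L[ℂ] H)
    (U : WithLp 2 (H × E) →L[ℂ] WithLp 2 (H × E)) (hU : IsUnitaryDilation T U) :
    IsUnitaryDilation (adjoint T) (star U) := by
  refine ⟨Unitary.star_mem hU.1, ?_⟩
  intro x
  apply ext_inner_left ℂ
  intro y
  have key : (inner ℂ y ((WithLp.equiv 2 (H × E) ((star U)
      ((WithLp.equiv 2 (H × E)).symm (x, 0)))).1) : ℂ)
      = inner ℂ ((WithLp.equiv 2 (H × E)).symm (y, (0:E)) : WithLp 2 (H × E))
          ((star U) ((WithLp.equiv 2 (H × E)).symm (x, 0))) := by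
    rw [inner_symm_fst_left]; rfl
  rw [key, ContinuousLinearMap.star_eq_adjoint, adjoint_inner_right, adjoint_inner_right]
  rw [WithLp.prod_inner_apply]
  have h2 : (((WithLp.equiv 2 (H × E)).symm (x, (0:E)) : WithLp 2 (H × E))).ofLp.2 = (0:E) := rfl
  have h1 : (((WithLp.equiv 2 (H × E)).symm (x, (0:E)) : WithLp 2 (H × E))).ofLp.1 = x := rfl
  rw [h1, h2, inner_zero_right, add_zero, hU.2 y]
  rfl

lemma adjoint_norm_le (T : H →L[ℂ] H) (hT : ‖T‖ ≤ 1) : ‖adjoint T‖ ≤ 1 := by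
  rw [LinearIsometryEquiv.norm_map (ContinuousLinearMap.adjoint (𝕜 := ℂ) (E := H) (F := H)) T]
  exact hT

/-- Key construction: a unitary dilation gives a unitary identification of the defect
space with the dilation space, carrying `D_T x` to the `E`-component of `U(x ⊕ 0)`. -/
lemma dilation_key (T : H →L[ℂ] H) (hT : ‖T‖ ≤ 1)
    [FiniteDimensional ℂ (defectSpace T)] [FiniteDimensional ℂ E]
    (hd : Module.finrank ℂ (defectSpace T) = Module.finrank ℂ E)
    (U : WithLp 2 (H × E) →L[ℂ] WithLp 2 (H × E)) (hU : IsUnitaryDilation T U) :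
    ∃ Ω : defectSpace T ≃ₗᵢ[ℂ] E, ∀ x : H,
      (WithLp.equiv 2 (H × E) (U ((WithLp.equiv 2 (H × E)).symm (x, 0)))).2
        = Ω ⟨defectOp T x, defectOp_mem T x⟩ := by
  classical
  set S := defectSpace T with hS
  set eK := WithLp.linearEquiv 2 ℂ (H × E) with heK
  set Cl : H →ₗ[ℂ] E :=
    (LinearMap.snd ℂ H E) ∘ₗ (eK.toLinearMap ∘ₗ ((U : WithLp 2 (H × E) →ₗ[ℂ] WithLp 2 (H × E)) ∘ₗ
      (eK.symm.toLinearMap ∘ₗ LinearMap.inl ℂ H E))) with hCl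
  have hClapp : ∀ x : H,
      Cl x = (WithLp.equiv 2 (H × E) (U ((WithLp.equiv 2 (H × E)).symm (x, 0)))).2 := by
    intro x; rfl
  have hnormU : ∀ z : WithLp 2 (H × E), ‖U z‖ = ‖z‖ := by
    intro z
    have h1 : star U * U = 1 := (Unitary.mem_iff.mp hU.1).1
    have : (inner ℂ (U z) (U z) : ℂ) = inner ℂ z z := by
      rw [← adjoint_inner_left U, ← ContinuousLinearMap.star_eq_adjoint, ← ContinuousLinearMap.mul_apply, h1, ContinuousLinearMap.one_apply]
    rw [inner_self_eq_norm_sq_to_K (𝕜 := ℂ), inner_self_eq_norm_sq_to_K (𝕜 := ℂ)] at this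
    have := Complex.ofReal_injective (by exact_mod_cast this : ((‖U z‖^2 : ℝ) : ℂ) = (‖z‖^2 : ℝ))
    exact sq_norm_eq (norm_nonneg _) (norm_nonneg _) this
  have hClnorm : ∀ x : H, ‖Cl x‖ = ‖defectOp T x‖ := by
    intro x
    apply sq_norm_eq (norm_nonneg _) (norm_nonneg _)
    have hfst : (U (eK.symm (x, 0))).ofLp.1 = T x := (hU.2 x).symm
    have hsnd : (U (eK.symm (x, 0))).ofLp.2 = Cl x := rfl
    have e1 := WithLp.prod_norm_sq_eq_of_L2 (U (eK.symm (x, 0)))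
    rw [← WithLp.ofLp_fst, ← WithLp.ofLp_snd] at e1
    rw [hfst, hsnd] at e1
    have e2 : ‖U (eK.symm (x, 0))‖^2 = ‖x‖^2 := by
      rw [hnormU, WithLp.prod_norm_sq_eq_of_L2]
      rw [← WithLp.ofLp_fst, ← WithLp.ofLp_snd]
      have h1 : ((eK.symm (x, 0) : WithLp 2 (H × E))).ofLp.1 = x := rfl
      have h2 : ((eK.symm (x, 0) : WithLp 2 (H × E))).ofLp.2 = (0 : E) := rfl
      rw [h1, h2]
      simp
    rw [defectOp_norm T hT]
    nlinarith [e1, e2]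
  have hClzero : ∀ x y : H, defectOp T x = defectOp T y → Cl x = Cl y := by
    intro x y hxy
    have : ‖Cl x - Cl y‖ = 0 := by
      rw [← map_sub, hClnorm, map_sub, hxy, sub_self, norm_zero]
    rwa [norm_sub_eq_zero_iff] at this
  set Dc : S →ₗ[ℂ] S := ((defectOp T : H →ₗ[ℂ] H).restrict
    (p := S) (q := S) (fun x _ => defectOp_mem T x)) with hDc
  have hDcinj : Function.Injective Dc := by
    rw [← LinearMap.ker_eq_bot, Submodule.eq_bot_iff]
    rintro ⟨v, hv⟩ hker
    have hDv : defectOp T v = 0 := by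
      have : (Dc ⟨v, hv⟩ : H) = 0 := by rw [hker]; rfl
      exact this
    have horth : ∀ w ∈ S, (inner ℂ v w : ℂ) = 0 := by
      intro w hw
      have hclosed : IsClosed {w : H | (inner ℂ v w : ℂ) = 0} :=
        isClosed_eq (innerSL ℂ v).continuous continuous_const
      have hsub : (LinearMap.range (defectOp T : H →ₗ[ℂ] H) : Set H) ⊆ {w : H | (inner ℂ v w : ℂ) = 0} := by
        rintro _ ⟨x, rfl⟩
        have : (inner ℂ v (defectOp T x) : ℂ) = inner ℂ (defectOp T v) x := by
          rw [← adjoint_inner_left (defectOp T) x v, (defectOp_sa T).adjoint_eq]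
        show (inner ℂ v (defectOp T x) : ℂ) = 0
        rw [this, hDv, inner_zero_left]
      have := closure_minimal hsub hclosed
      exact this (by exact hw)
    have : (inner ℂ v v : ℂ) = 0 := horth v hv
    ext
    simpa using inner_self_eq_zero.mp this
  have hDcsurj : Function.Surjective Dc :=
    (LinearMap.injective_iff_surjective).mp hDcinj
  set e : S ≃ₗ[ℂ] S := LinearEquiv.ofBijective Dc ⟨hDcinj, hDcsurj⟩ with he
  set φ : S →ₗ[ℂ] E := Cl ∘ₗ S.subtype ∘ₗ (e.symm : S →ₗ[ℂ] S) with hφ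
  have hφnorm : ∀ v : S, ‖φ v‖ = ‖v‖ := by
    intro v
    have h1 : Dc (e.symm v) = v := e.apply_symm_apply v
    have h2 : defectOp T ((e.symm v : S) : H) = (v : H) := congrArg Subtype.val h1
    have : ‖φ v‖ = ‖Cl ((e.symm v : S) : H)‖ := rfl
    rw [this, hClnorm, h2]
    rfl
  set Ω₀ : S →ₗᵢ[ℂ] E := ⟨φ, hφnorm⟩ with hΩ₀
  refine ⟨Ω₀.toLinearIsometryEquiv hd, ?_⟩
  intro x
  rw [← hClapp]
  have happ : (Ω₀.toLinearIsometryEquiv hd) ⟨defectOp T x, defectOp_mem T x⟩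
      = Cl ((e.symm ⟨defectOp T x, defectOp_mem T x⟩ : S) : H) := rfl
  rw [happ]
  apply hClzero
  exact (congrArg Subtype.val (e.apply_symm_apply ⟨defectOp T x, defectOp_mem T x⟩)).symm

/-- Orthogonality relation for a unitary dilation. -/
lemma dilation_orth (T : H →L[ℂ] H)
    (W : WithLp 2 (H × E) →L[ℂ] WithLp 2 (H × E)) (hW : IsUnitaryDilation T W)
    (y : H) (f : E) :
    (inner ℂ ((W ((WithLp.equiv 2 (H × E)).symm (y, 0))).ofLp.2)
        ((W ((WithLp.equiv 2 (H × E)).symm (0, f))).ofLp.2) : ℂ)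
      = - inner ℂ (T y) ((W ((WithLp.equiv 2 (H × E)).symm (0, f))).ofLp.1) := by
  have h0 : (inner ℂ (W ((WithLp.equiv 2 (H × E)).symm (y, 0)))
      (W ((WithLp.equiv 2 (H × E)).symm (0, f))) : ℂ) = 0 := by
    rw [ContinuousLinearMap.inner_map_map_of_mem_unitary hW.1, inner_symm_fst_left]
    have h1 : (((WithLp.equiv 2 (H × E)).symm ((0:H), f) : WithLp 2 (H × E))).ofLp.1 = (0:H) := rfl
    rw [h1, inner_zero_right]
  rw [WithLp.prod_inner_apply] at h0
  have h1 : (W ((WithLp.equiv 2 (H × E)).symm (y, 0))).ofLp.1 = T y := (hW.2 y).symm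
  rw [h1] at h0
  linear_combination h0

end Aux

section Main

open ContinuousLinearMap

set_option synthInstance.maxHeartbeats 1000000
set_option maxHeartbeats 1000000

/-- If `u` is a fixed unitary `N`-dilation of `T` on `H ⊕ E`, then every
unitary `N`-dilation `U` of `T` on `H ⊕ E'` has the form
`U = (I_H ⊕ Ω_*⁻¹) ∘ u ∘ (I_H ⊕ Ω)` for some unitaries `Ω, Ω_* : E' → E`. -/
theorem unitary_dilation_eq_conjugate_of_fixed_dilation
    {H : Type*} [NormedAddCommGroup H] [InnerProductSpace ℂ H] [CompleteSpace H]
    {E : Type*} [NormedAddCommGroup E] [InnerProductSpace ℂ E] [CompleteSpace E]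
    {E' : Type*} [NormedAddCommGroup E'] [InnerProductSpace ℂ E'] [CompleteSpace E']
    (N : ℕ) (T : H →L[ℂ] H) (hT : ‖T‖ ≤ 1)
    [FiniteDimensional ℂ (defectSpace T)]
    [FiniteDimensional ℂ (defectSpace (ContinuousLinearMap.adjoint T))]
    [FiniteDimensional ℂ E] [FiniteDimensional ℂ E']
    (hdT : Module.finrank ℂ (defectSpace T) = N)
    (hdTs : Module.finrank ℂ (defectSpace (ContinuousLinearMap.adjoint T)) = N)
    (hE : Module.finrank ℂ E = N) (hE' : Module.finrank ℂ E' = N)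
    (u : WithLp 2 (H × E) →L[ℂ] WithLp 2 (H × E)) (hu : IsUnitaryDilation T u)
    (U : WithLp 2 (H × E') →L[ℂ] WithLp 2 (H × E')) (hU : IsUnitaryDilation T U) :
    ∃ (Ω : E' ≃ₗᵢ[ℂ] E) (Ωs : E' ≃ₗᵢ[ℂ] E),
      ∀ (x : H) (e' : E'),
        let w := WithLp.equiv 2 (H × E) (u ((WithLp.equiv 2 (H × E)).symm (x, Ω e')))
        WithLp.equiv 2 (H × E') (U ((WithLp.equiv 2 (H × E')).symm (x, e'))) =
          (w.1, Ωs.symm w.2) := by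
  classical
  have hT' : ‖adjoint T‖ ≤ 1 := adjoint_norm_le T hT
  obtain ⟨Ω₁, hΩ₁⟩ := dilation_key T hT (hdT.trans hE.symm) u hu
  obtain ⟨Ω₁', hΩ₁'⟩ := dilation_key T hT (hdT.trans hE'.symm) U hU
  obtain ⟨Ω₂, hΩ₂⟩ := dilation_key (adjoint T) hT' (hdTs.trans hE.symm) (star u)
    (starU_dilation T u hu)
  obtain ⟨Ω₂', hΩ₂'⟩ := dilation_key (adjoint T) hT' (hdTs.trans hE'.symm) (star U)
    (starU_dilation T U hU)
  set Ω : E' ≃ₗᵢ[ℂ] E := Ω₂'.symm.trans Ω₂ with hΩdef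
  set Ωs : E' ≃ₗᵢ[ℂ] E := Ω₁'.symm.trans Ω₁ with hΩsdef
  refine ⟨Ω, Ωs, ?_⟩
  intro x e'
  -- the crucial equality of the `H`-components of `U(0 ⊕ e')` and `u(0 ⊕ Ω e')`
  have hB : ∀ f : E', (U ((WithLp.equiv 2 (H × E')).symm (0, f))).ofLp.1
      = (u ((WithLp.equiv 2 (H × E)).symm (0, Ω f))).ofLp.1 := by
    intro f
    apply ext_inner_left ℂ
    intro y
    have lhs : (inner ℂ y ((U ((WithLp.equiv 2 (H × E')).symm (0, f))).ofLp.1) : ℂ)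
        = inner ℂ (Ω₂' ⟨defectOp (adjoint T) y, defectOp_mem _ y⟩) f := by
      calc (inner ℂ y ((U ((WithLp.equiv 2 (H × E')).symm (0, f))).ofLp.1) : ℂ)
          = inner ℂ ((WithLp.equiv 2 (H × E')).symm (y, (0:E')) : WithLp 2 (H × E'))
              (U ((WithLp.equiv 2 (H × E')).symm (0, f))) := (inner_symm_fst_left y _).symm
        _ = inner ℂ ((star U) ((WithLp.equiv 2 (H × E')).symm (y, (0:E')) : WithLp 2 (H × E')))
              ((WithLp.equiv 2 (H × E')).symm (0, f) : WithLp 2 (H × E')) := by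
            rw [ContinuousLinearMap.star_eq_adjoint, ← adjoint_inner_left]
        _ = inner ℂ (((star U) ((WithLp.equiv 2 (H × E')).symm (y, (0:E')) :
              WithLp 2 (H × E'))).ofLp.2) f := inner_symm_snd_right f _
        _ = inner ℂ (Ω₂' ⟨defectOp (adjoint T) y, defectOp_mem _ y⟩) f := by rw [← hΩ₂' y]; rfl
    have rhs : (inner ℂ y ((u ((WithLp.equiv 2 (H × E)).symm (0, Ω f))).ofLp.1) : ℂ)
        = inner ℂ (Ω₂ ⟨defectOp (adjoint T) y, defectOp_mem _ y⟩) (Ω f) := by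
      calc (inner ℂ y ((u ((WithLp.equiv 2 (H × E)).symm (0, Ω f))).ofLp.1) : ℂ)
          = inner ℂ ((WithLp.equiv 2 (H × E)).symm (y, (0:E)) : WithLp 2 (H × E))
              (u ((WithLp.equiv 2 (H × E)).symm (0, Ω f))) := (inner_symm_fst_left y _).symm
        _ = inner ℂ ((star u) ((WithLp.equiv 2 (H × E)).symm (y, (0:E)) : WithLp 2 (H × E)))
              ((WithLp.equiv 2 (H × E)).symm (0, Ω f) : WithLp 2 (H × E)) := by
            rw [ContinuousLinearMap.star_eq_adjoint, ← adjoint_inner_left]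
        _ = inner ℂ (((star u) ((WithLp.equiv 2 (H × E)).symm (y, (0:E)) :
              WithLp 2 (H × E))).ofLp.2) (Ω f) := inner_symm_snd_right (Ω f) _
        _ = inner ℂ (Ω₂ ⟨defectOp (adjoint T) y, defectOp_mem _ y⟩) (Ω f) := by rw [← hΩ₂ y]; rfl
    rw [lhs, rhs]
    have hΩf : Ω f = Ω₂ (Ω₂'.symm f) := rfl
    rw [hΩf, LinearIsometryEquiv.inner_map_map,
      ← LinearIsometryEquiv.inner_map_map Ω₂' ⟨defectOp (adjoint T) y, defectOp_mem _ y⟩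
        (Ω₂'.symm f), LinearIsometryEquiv.apply_symm_apply]
  -- Ωs.symm carries Ω₁ to Ω₁'
  have hΩs : ∀ v : defectSpace T, Ωs.symm (Ω₁ v) = Ω₁' v := by
    intro v
    have h : Ω₁ v = Ωs (Ω₁' v) := by
      rw [hΩsdef, LinearIsometryEquiv.trans_apply, LinearIsometryEquiv.symm_apply_apply]
    rw [h, LinearIsometryEquiv.symm_apply_apply]
  -- surjectivity of x ↦ (U(x ⊕ 0))._2
  have hsurjCl : ∀ a : E', ∃ y : H,
      (U ((WithLp.equiv 2 (H × E')).symm (y, 0))).ofLp.2 = a := by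
    intro a
    obtain ⟨y, hy⟩ : ∃ y : H, defectOp T y = ((Ω₁'.symm a : defectSpace T) : H) :=
      (defectSpace_eq_range T).ge (Ω₁'.symm a).2
    refine ⟨y, ?_⟩
    have h1 : (U ((WithLp.equiv 2 (H × E')).symm (y, 0))).ofLp.2
        = Ω₁' ⟨defectOp T y, defectOp_mem T y⟩ := hΩ₁' y
    rw [h1,
      (Subtype.ext hy : (⟨defectOp T y, defectOp_mem T y⟩ : defectSpace T) = Ω₁'.symm a),
      LinearIsometryEquiv.apply_symm_apply]
  -- second-component equality for the `e'` parts
  have hD : (U ((WithLp.equiv 2 (H × E')).symm (0, e'))).ofLp.2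
      = Ωs.symm ((u ((WithLp.equiv 2 (H × E)).symm (0, Ω e'))).ofLp.2) := by
    set a := (U ((WithLp.equiv 2 (H × E')).symm (0, e'))).ofLp.2 with ha
    set b := Ωs.symm ((u ((WithLp.equiv 2 (H × E)).symm (0, Ω e'))).ofLp.2) with hb
    have key : ∀ y : H,
        (inner ℂ ((U ((WithLp.equiv 2 (H × E')).symm (y, 0))).ofLp.2) (a - b) : ℂ) = 0 := by
      intro y
      rw [inner_sub_right]
      have e1 : (inner ℂ ((U ((WithLp.equiv 2 (H × E')).symm (y, 0))).ofLp.2) a : ℂ)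
          = - inner ℂ (T y) ((U ((WithLp.equiv 2 (H × E')).symm (0, e'))).ofLp.1) :=
        dilation_orth T U hU y e'
      have e2 : (inner ℂ ((U ((WithLp.equiv 2 (H × E')).symm (y, 0))).ofLp.2) b : ℂ)
          = - inner ℂ (T y) ((U ((WithLp.equiv 2 (H × E')).symm (0, e'))).ofLp.1) := by
        have c1 : (U ((WithLp.equiv 2 (H × E')).symm (y, 0))).ofLp.2
            = Ω₁' ⟨defectOp T y, defectOp_mem T y⟩ := hΩ₁' y
        have c2 : b = Ω₁' (Ω₁.symm ((u ((WithLp.equiv 2 (H × E)).symm (0, Ω e'))).ofLp.2)) := by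
          rw [hb, ← hΩs (Ω₁.symm _), LinearIsometryEquiv.apply_symm_apply]
        rw [c1, c2, LinearIsometryEquiv.inner_map_map,
          ← LinearIsometryEquiv.inner_map_map Ω₁ ⟨defectOp T y, defectOp_mem T y⟩,
          LinearIsometryEquiv.apply_symm_apply, ← hΩ₁ y]
        have : (inner ℂ ((u ((WithLp.equiv 2 (H × E)).symm (y, 0))).ofLp.2)
            ((u ((WithLp.equiv 2 (H × E)).symm (0, Ω e'))).ofLp.2) : ℂ)
            = - inner ℂ (T y) ((u ((WithLp.equiv 2 (H × E)).symm (0, Ω e'))).ofLp.1) :=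
          dilation_orth T u hu y (Ω e')
        rw [show ((WithLp.equiv 2 (H × E) (u ((WithLp.equiv 2 (H × E)).symm (y, 0)))).2 :E)
            = (u ((WithLp.equiv 2 (H × E)).symm (y, 0))).ofLp.2 from rfl]
        rw [this, ← hB e']
      rw [e1, e2, sub_self]
    obtain ⟨y, hy⟩ := hsurjCl (a - b)
    have := key y
    rw [hy, inner_self_eq_zero, sub_eq_zero] at this
    exact this
  -- now assemble
  have hsumE' : ((WithLp.equiv 2 (H × E')).symm (x, e') : WithLp 2 (H × E'))
      = (WithLp.equiv 2 (H × E')).symm (x, 0) + (WithLp.equiv 2 (H × E')).symm (0, e') := by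
    change WithLp.toLp 2 _ = WithLp.toLp 2 _ + WithLp.toLp 2 _
    rw [← WithLp.toLp_add, Prod.mk_add_mk, add_zero, zero_add]
  have hsumE : ((WithLp.equiv 2 (H × E)).symm (x, Ω e') : WithLp 2 (H × E))
      = (WithLp.equiv 2 (H × E)).symm (x, 0) + (WithLp.equiv 2 (H × E)).symm (0, Ω e') := by
    change WithLp.toLp 2 _ = WithLp.toLp 2 _ + WithLp.toLp 2 _
    rw [← WithLp.toLp_add, Prod.mk_add_mk, add_zero, zero_add]
  have hfst1 : (U ((WithLp.equiv 2 (H × E')).symm (x, e'))).ofLp.1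
      = (U ((WithLp.equiv 2 (H × E')).symm (x, 0))).ofLp.1
        + (U ((WithLp.equiv 2 (H × E')).symm (0, e'))).ofLp.1 := by
    rw [hsumE', map_add]; rfl
  have hsnd1 : (U ((WithLp.equiv 2 (H × E')).symm (x, e'))).ofLp.2
      = (U ((WithLp.equiv 2 (H × E')).symm (x, 0))).ofLp.2
        + (U ((WithLp.equiv 2 (H × E')).symm (0, e'))).ofLp.2 := by
    rw [hsumE', map_add]; rfl
  have hfst2 : (u ((WithLp.equiv 2 (H × E)).symm (x, Ω e'))).ofLp.1
      = (u ((WithLp.equiv 2 (H × E)).symm (x, 0))).ofLp.1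
        + (u ((WithLp.equiv 2 (H × E)).symm (0, Ω e'))).ofLp.1 := by
    rw [hsumE, map_add]; rfl
  have hsnd2 : (u ((WithLp.equiv 2 (H × E)).symm (x, Ω e'))).ofLp.2
      = (u ((WithLp.equiv 2 (H × E)).symm (x, 0))).ofLp.2
        + (u ((WithLp.equiv 2 (H × E)).symm (0, Ω e'))).ofLp.2 := by
    rw [hsumE, map_add]; rfl
  have t1 : (U ((WithLp.equiv 2 (H × E')).symm (x, 0))).ofLp.1 = T x := (hU.2 x).symm
  have t2 : (u ((WithLp.equiv 2 (H × E)).symm (x, 0))).ofLp.1 = T x := (hu.2 x).symm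
  refine Prod.ext ?_ ?_
  · show (U ((WithLp.equiv 2 (H × E')).symm (x, e'))).ofLp.1
      = (u ((WithLp.equiv 2 (H × E)).symm (x, Ω e'))).ofLp.1
    rw [hfst1, hfst2, t1, t2, hB e']
  · show (U ((WithLp.equiv 2 (H × E')).symm (x, e'))).ofLp.2
      = Ωs.symm ((u ((WithLp.equiv 2 (H × E)).symm (x, Ω e'))).ofLp.2)
    rw [hsnd1, hsnd2, map_add]
    have s1 : (U ((WithLp.equiv 2 (H × E')).symm (x, 0))).ofLp.2
        = Ωs.symm ((u ((WithLp.equiv 2 (H × E)).symm (x, 0))).ofLp.2) := by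
      have c1 : (U ((WithLp.equiv 2 (H × E')).symm (x, 0))).ofLp.2
          = Ω₁' ⟨defectOp T x, defectOp_mem T x⟩ := hΩ₁' x
      have c2 : (u ((WithLp.equiv 2 (H × E)).symm (x, 0))).ofLp.2
          = Ω₁ ⟨defectOp T x, defectOp_mem T x⟩ := hΩ₁ x
      rw [c1, c2, hΩs]
    rw [s1, hD]
end Main
end
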